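/- With ψ the standard semicircle moment functional (M^ψ(z) = z²M^ψ(z)² + 1) and φ defined by φ(R) = ψ((1−sX)^{−1}R)/M^ψ(s), the shifted Boolean transform of φ splits additively: η̃^φ(z) = η̃^ψ(s) + η̃^ψ(z), where η̃^ψ(z) = z M^ψ(z). -/
import Mathlib

open Finset

lemma catalan_le_four_pow (n : ℕ) : catalan n ≤ 4 ^ n := by
  calc catalan n ≤ n.centralBinom := Nat.le_of_dvd n.centralBinom_pos
        ⟨n+1, by rw [← succ_mul_catalan_eq_centralBinom]; ring⟩
    _ = (2 * n).choose n := Nat.centralBinom_eq_two_mul_choose n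
    _ ≤ (2 * n + 1).choose n := Nat.choose_le_choose n (by omega)
    _ ≤ 4 ^ n := Nat.choose_middle_le_pow n

lemma summable_cat (t : ℝ) (ht : |t| < 1 / 2) :
    Summable (fun n : ℕ => ‖(catalan n : ℝ) * t ^ (2 * n)‖) := by
  have h4 : Summable (fun n : ℕ => (4 * t ^ 2) ^ n) := by
    apply summable_geometric_of_lt_one (by positivity)
    have : |t| * |t| < (1/2) * (1/2) :=
      mul_lt_mul' ht.le ht (abs_nonneg t) (by norm_num)
    nlinarith [sq_abs t]
  refine Summable.of_nonneg_of_le (fun n => norm_nonneg _) (fun n => ?_) h4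
  rw [Real.norm_eq_abs, abs_mul, abs_pow, mul_pow, pow_mul, sq_abs]
  apply mul_le_mul _ le_rfl (by positivity) (by positivity)
  rw [Nat.abs_cast]
  calc ((catalan n : ℝ)) ≤ ((4 ^ n : ℕ) : ℝ) := by exact_mod_cast catalan_le_four_pow n
    _ = 4 ^ n := by push_cast; ring

lemma semicircle_eq (t : ℝ) (ht : |t| < 1 / 2) :
    (∑' n : ℕ, (catalan n : ℝ) * t ^ (2 * n)) =
      t ^ 2 * (∑' n : ℕ, (catalan n : ℝ) * t ^ (2 * n)) ^ 2 + 1 := by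
  set f : ℕ → ℝ := fun n => (catalan n : ℝ) * t ^ (2 * n) with hf
  have hsum := summable_cat t ht
  have hprod : (∑' n, f n) * (∑' n, f n)
      = ∑' n, ∑ kl ∈ antidiagonal n, f kl.1 * f kl.2 :=
    tsum_mul_tsum_eq_tsum_sum_antidiagonal_of_summable_norm hsum hsum
  have hconv : ∀ n : ℕ, ∑ kl ∈ antidiagonal n, f kl.1 * f kl.2
      = (catalan (n+1) : ℝ) * t ^ (2 * n) := by
    intro n
    rw [Finset.Nat.sum_antidiagonal_eq_sum_range_succ (fun i j => f i * f j)]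
    rw [catalan_succ']
    push_cast [Finset.Nat.sum_antidiagonal_eq_sum_range_succ
      (fun i j => (catalan i * catalan j : ℕ))]
    rw [Finset.sum_mul]
    apply Finset.sum_congr rfl
    intro i hi
    simp only [hf]
    push_cast
    have hij : 2 * i + 2 * (n - i) = 2 * n := by
      have := Finset.mem_range.mp hi; omega
    rw [show ((catalan i : ℝ) * t ^ (2*i)) * ((catalan (n-i) : ℝ) * t ^ (2*(n-i)))
        = (catalan i : ℝ) * (catalan (n-i) : ℝ) * t ^ (2*i + 2*(n-i)) by ring, hij]
  have hsum2 : Summable fun n => ∑ kl ∈ antidiagonal n, f kl.1 * f kl.2 :=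
    summable_sum_mul_antidiagonal_of_summable_norm' hsum hsum.of_norm hsum hsum.of_norm
  calc (∑' n, f n) = f 0 + ∑' n, f (n + 1) := (Summable.tsum_eq_zero_add hsum.of_norm)
    _ = 1 + t ^ 2 * ∑' n, ∑ kl ∈ antidiagonal n, f kl.1 * f kl.2 := by
        congr 1
        · simp [hf]
        · rw [← tsum_mul_left]
          apply tsum_congr
          intro n
          rw [hconv n]
          simp only [hf]
          rw [show 2 * (n + 1) = 2 * n + 2 by ring, pow_add]
          ring
    _ = t ^ 2 * (∑' n, f n) ^ 2 + 1 := by rw [← hprod]; ring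

theorem semicircle_tilted_boolean_transform_additive
    (s z : ℝ) (hs : |s| < 1 / 2) (hz : |z| < 1 / 2) (hsz : s ≠ z) (hz0 : z ≠ 0)
    (Ms Mz Mφz : ℝ)
    (hMs : Ms = ∑' n : ℕ, (catalan n : ℝ) * s ^ (2 * n))
    (hMz : Mz = ∑' n : ℕ, (catalan n : ℝ) * z ^ (2 * n))
    (hMφz : Mφz = (s * Ms - z * Mz) / ((s - z) * Ms)) :
    (Mφz - 1) / (z * Mφz) = s * Ms + z * Mz := by
  have hMs' : Ms = s ^ 2 * Ms ^ 2 + 1 := by rw [hMs]; exact semicircle_eq s hs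
  have hMz' : Mz = z ^ 2 * Mz ^ 2 + 1 := by rw [hMz]; exact semicircle_eq z hz
  have hMsne : Ms ≠ 0 := by nlinarith [sq_nonneg (s * Ms)]
  have hMzne : Mz ≠ 0 := by nlinarith [sq_nonneg (z * Mz)]
  have hkey : Ms - Mz = (s * Ms - z * Mz) * (s * Ms + z * Mz) := by nlinarith
  have hnum : s * Ms - z * Mz ≠ 0 := by
    intro h
    have hMM : Ms = Mz := by rw [h, zero_mul] at hkey; linarith
    apply hsz
    have : s * Ms = z * Ms := by rw [hMM] at h ⊢; linarith
    exact mul_right_cancel₀ hMsne this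
  have hszne : s - z ≠ 0 := sub_ne_zero_of_ne hsz
  have hMφne : Mφz ≠ 0 := by
    rw [hMφz]
    exact div_ne_zero hnum (mul_ne_zero hszne hMsne)
  rw [hMφz]
  field_simp
  linear_combination z * hkey
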